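/- Let v₁, …, vₙ ∈ ℝ^{n−1} with (vᵢ)ⱼ = 0 for j ≥ i and (vᵢ)_{i−1} > 0 for i ≥ 2, and let δ₁, …, δₙ ≥ 0 be distances to an unknown apex. The output o ∈ ℝⁿ of the ApexAddition algorithm, computed iteratively by o⁽¹⁾ = (δ₁, 0, …, 0) and for i = 2,…,n updating o_{i−1} := o_{i−1}^{(i−1)} − (δᵢ² − ℓᵢ²)/(2(vᵢ)_{i−1}) where ℓᵢ = ‖v̂ᵢ − o^{(i−1)}‖₂, and oᵢ := √((o_{i−1}^{(i−1)})² − o_{i−1}²), satisfies ‖o − v̂ᵢ‖₂ = δᵢ for all 1 ≤ i ≤ n, provided all the square roots taken are of non-negative quantities. -/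

import Mathlib

/-- Correctness of the ApexAddition algorithm (1-based indexing).  `v i j` is
the j-th coordinate of the i-th vertex of the base simplex (lower triangular,
positive subdiagonal, zero-extended to ℝⁿ), `δ i` the prescribed distance from
the unknown apex to vertex i, and `O i j` the j-th coordinate of the
algorithm's state after iteration i.  If the states satisfy the recursion of
the algorithm and every square root taken is of a non-negative quantity, then
the final output `O n` realizes all the prescribed distances. -/
theorem apexAddition_correct (n : ℕ) (hn : 1 ≤ n)
    (v : ℕ → ℕ → ℝ)
    (htri : ∀ i j, i ≤ j → v i j = 0)
    (hpos : ∀ i, 2 ≤ i → i ≤ n → 0 < v i (i - 1))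
    (δ : ℕ → ℝ) (hδ : ∀ i, 1 ≤ i → i ≤ n → 0 ≤ δ i)
    (O : ℕ → ℕ → ℝ)
    (hinit1 : O 1 1 = δ 1)
    (hinit2 : ∀ j, j ≠ 1 → O 1 j = 0)
    (hstep1 : ∀ i, 2 ≤ i → i ≤ n →
      O i (i - 1) = O (i-1) (i-1) -
        ((δ i)^2 - ∑ j ∈ Finset.Icc 1 n, (v i j - O (i-1) j)^2) /
          (2 * v i (i - 1)))
    (hstep2 : ∀ i, 2 ≤ i → i ≤ n →
      O i i = Real.sqrt ((O (i-1) (i-1))^2 - (O i (i-1))^2))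
    (hstep3 : ∀ i, 2 ≤ i → i ≤ n → ∀ j, j ≠ i - 1 → j ≠ i → O i j = O (i-1) j)
    (hsqrt_nonneg : ∀ i, 2 ≤ i → i ≤ n →
      (O i (i - 1))^2 ≤ (O (i-1) (i-1))^2) :
    ∀ i, 1 ≤ i → i ≤ n →
      Real.sqrt (∑ j ∈ Finset.Icc 1 n, (O n j - v i j)^2) = δ i := by
  have key : ∀ k, 1 ≤ k → k ≤ n →
      (∀ j, k < j → O k j = 0) ∧
      (∀ i, 1 ≤ i → i ≤ k →
        ∑ j ∈ Finset.Icc 1 n, (O k j - v i j)^2 = (δ i)^2) := by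
    intro k hk1
    induction k, hk1 using Nat.le_induction with
    | base =>
      intro _
      refine ⟨fun j hj => hinit2 j (by omega), ?_⟩
      intro i hi1 hi2
      have hi : i = 1 := by omega
      subst hi
      rw [Finset.sum_eq_single 1]
      · rw [hinit1, htri 1 1 le_rfl]; ring
      · intro j hj hne
        rw [hinit2 j hne, htri 1 j (Finset.mem_Icc.mp hj).1]; ring
      · intro h; exact absurd (Finset.mem_Icc.mpr ⟨le_rfl, hn⟩) h
    | succ k hk ih =>
      intro hkn
      obtain ⟨ihz, ihd⟩ := ih (by omega)
      have h2 : 2 ≤ k + 1 := by omega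
      have hb := hstep1 (k+1) h2 hkn
      have hs2 := hstep2 (k+1) h2 hkn
      have hsn := hsqrt_nonneg (k+1) h2 hkn
      have h3 := hstep3 (k+1) h2 hkn
      simp only [Nat.add_sub_cancel] at hb hs2 hsn h3
      -- square of the new last coordinate
      have hsq : (O (k+1) (k+1))^2 = (O k k)^2 - (O (k+1) k)^2 := by
        rw [hs2, Real.sq_sqrt (by linarith)]
      -- splitting lemma
      have split : ∀ f : ℕ → ℝ, ∑ j ∈ Finset.Icc 1 n, f j
          = f k + f (k+1) + ∑ j ∈ Finset.Icc 1 n \ {k, k+1}, f j := by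
        intro f
        have hsub : ({k, k+1} : Finset ℕ) ⊆ Finset.Icc 1 n := by
          intro x hx
          simp only [Finset.mem_insert, Finset.mem_singleton] at hx
          rcases hx with h | h <;> (subst h; exact Finset.mem_Icc.mpr ⟨by omega, by omega⟩)
        rw [← Finset.sum_sdiff hsub, Finset.sum_pair (by omega)]
        ring
      have hrest : ∀ j ∈ Finset.Icc 1 n \ {k, k+1}, O (k+1) j = O k j := by
        intro j hj
        simp only [Finset.mem_sdiff, Finset.mem_insert, Finset.mem_singleton, not_or] at hj
        exact h3 j hj.2.1 hj.2.2
      have hOkk1 : O k (k+1) = 0 := ihz (k+1) (by omega)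
      constructor
      · intro j hj
        rw [h3 j (by omega) (by omega)]
        exact ihz j (by omega)
      · intro i hi1 hi2
        rcases Nat.lt_or_ge i (k+1) with hlt | hge
        · -- old vertex: distance is preserved
          have hvk : v i k = 0 := htri i k (by omega)
          have hvk1 : v i (k+1) = 0 := htri i (k+1) (by omega)
          have hold := ihd i hi1 (by omega)
          rw [split] at hold ⊢
          have hre : ∑ j ∈ Finset.Icc 1 n \ {k, k+1}, (O (k+1) j - v i j)^2
              = ∑ j ∈ Finset.Icc 1 n \ {k, k+1}, (O k j - v i j)^2 :=
            Finset.sum_congr rfl (fun j hj => by rw [hrest j hj])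
          rw [hre, hvk, hvk1] at *
          rw [hOkk1] at hold
          nlinarith [hold, hsq]
        · -- new vertex
          have hi : i = k + 1 := by omega
          subst hi
          have hc : 0 < v (k+1) k := by
            have := hpos (k+1) h2 hkn
            simpa using this
          have hvkk1 : v (k+1) (k+1) = 0 := htri (k+1) (k+1) le_rfl
          set S := ∑ j ∈ Finset.Icc 1 n, (v (k+1) j - O k j)^2 with hS
          have hkey : (O k k - O (k+1) k) * (2 * v (k+1) k) = (δ (k+1))^2 - S := by
            rw [hb]; field_simp; ring
          have hSsplit : S = (v (k+1) k - O k k)^2 +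
              ∑ j ∈ Finset.Icc 1 n \ {k, k+1}, (v (k+1) j - O k j)^2 := by
            rw [hS, split (fun j => (v (k+1) j - O k j)^2), hvkk1, hOkk1]
            ring
          rw [split]
          have hre : ∑ j ∈ Finset.Icc 1 n \ {k, k+1}, (O (k+1) j - v (k+1) j)^2
              = ∑ j ∈ Finset.Icc 1 n \ {k, k+1}, (v (k+1) j - O k j)^2 :=
            Finset.sum_congr rfl (fun j hj => by rw [hrest j hj]; ring)
          rw [hre, hvkk1]
          nlinarith [hkey, hSsplit, hsq]
  intro i hi1 hi2
  rw [(key n hn le_rfl).2 i hi1 hi2, Real.sqrt_sq (hδ i hi1 hi2)]
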